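/- Gauss–Bonnet for two-dimensional geometric graphs: let G=(V,E) be a finite simple graph such that for every vertex x the unit sphere S(x) (the subgraph induced on the neighbors of x) is isomorphic to a cycle graph of length d(x) ≥ 4, where d(x) is the degree of x. Then the curvature at each vertex equals K(x) = 1 − d(x)/6, and Σ_{x∈V} (1 − d(x)/6) = χ(G). -/

import Mathlib

open Classical Finset

set_option linter.unusedSectionVars false
set_option maxHeartbeats 1000000

/-- The Euler characteristic of a finite simple graph:
`χ(G) = Σ_{k≥1} (−1)^{k+1} v_k(G)`, where `v_k` counts cliques with `k` vertices. -/
noncomputable def eulerChar {V : Type*} [Fintype V] (G : SimpleGraph V) : ℤ :=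
  ∑ s ∈ Finset.univ.powerset.filter
      (fun s : Finset V => s.Nonempty ∧ G.IsClique (s : Set V)),
    (-1 : ℤ) ^ (s.card + 1)

/-- The Euler curvature of `G` at a vertex `x`:
`K(x) = Σ_{c clique, x ∈ c} (−1)^{|c|+1}/|c|`. -/
noncomputable def curvature {V : Type*} [Fintype V] (G : SimpleGraph V) (x : V) : ℚ :=
  ∑ s ∈ Finset.univ.powerset.filter
      (fun s : Finset V => x ∈ s ∧ G.IsClique (s : Set V)),
    (-1 : ℚ) ^ (s.card + 1) / (s.card : ℚ)

section Aux

open SimpleGraph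

open Fin.CommRing in
lemma cycle_tri_free {m : ℕ} {a b c : Fin (m+4)}
    (hab : (cycleGraph (m+4)).Adj a b) (hbc : (cycleGraph (m+4)).Adj b c)
    (hac : (cycleGraph (m+4)).Adj a c) : False := by
  have hne : a ≠ c := hac.ne
  have h1 : ((1:Fin (m+4))) ≠ 0 := by simp [Fin.ext_iff]
  have e2 : ((1+1+1 : Fin (m+4))).val = 3 := by
    simp only [Fin.add_def, Fin.val_one]
    rw [Nat.mod_eq_of_lt (show 1+1 < m+4 by omega)]; exact Nat.mod_eq_of_lt (by omega)
  have h3 : ((1+1+1:Fin (m+4))) ≠ 0 := by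
    intro h; rw [Fin.ext_iff, e2] at h; simp at h
  rw [cycleGraph_adj] at hab hbc hac
  rcases hab with h|h <;> rcases hbc with h'|h' <;> rcases hac with h''|h'' <;>
    first
      | (exact hne (by linear_combination h - h'))
      | (exact hne (by linear_combination h' - h))
      | (exact h1 (by linear_combination h + h' - h''))
      | (exact h1 (by linear_combination h'' - h - h'))
      | (exact h3 (by linear_combination h + h' + h''))
      | (exact h3 (by linear_combination - h - h' - h''))

variable {V : Type*} [Fintype V] (G : SimpleGraph V) (x : V) {m : ℕ}

lemma tri_near (e : (G.induce (G.neighborSet x)) ≃g cycleGraph (m+4))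
    {y z w : V} (hy : G.Adj x y) (hz : G.Adj x z) (hw : G.Adj x w)
    (hyz : G.Adj y z) (hzw : G.Adj z w) (hyw : G.Adj y w) : False := by
  have h1 : (cycleGraph (m+4)).Adj (e ⟨y, hy⟩) (e ⟨z, hz⟩) := e.map_adj_iff.mpr (by simpa)
  have h2 : (cycleGraph (m+4)).Adj (e ⟨z, hz⟩) (e ⟨w, hw⟩) := e.map_adj_iff.mpr (by simpa)
  have h3 : (cycleGraph (m+4)).Adj (e ⟨y, hy⟩) (e ⟨w, hw⟩) := e.map_adj_iff.mpr (by simpa)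
  exact cycle_tri_free h1 h2 h3

lemma deg_two (e : (G.induce (G.neighborSet x)) ≃g cycleGraph (m+4))
    {y : V} (hy : G.Adj x y) :
    ((G.neighborFinset x).filter (fun z => G.Adj y z)).card = 2 := by
  have hcard : Fintype.card ((G.induce (G.neighborSet x)).neighborSet ⟨y, hy⟩) = 2 := by
    rw [Fintype.card_congr (e.mapNeighborSet ⟨y, hy⟩)]
    rw [card_neighborSet_eq_degree]
    exact cycleGraph_degree_three_le (n := m+1)
  rw [← Fintype.card_coe, ← hcard]
  apply Fintype.card_congr
  refine ⟨fun b => ⟨⟨b.1, ?_⟩, ?_⟩, fun a => ⟨a.1.1, ?_⟩, ?_, ?_⟩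
  · have h2 := b.2
    simp only [mem_filter, mem_neighborFinset] at h2
    exact h2.1
  · have h2 := b.2
    simp only [mem_filter, mem_neighborFinset] at h2
    simp only [mem_neighborSet, comap_adj]
    exact h2.2
  · have h2 := a.2
    simp only [mem_neighborSet, comap_adj, Function.Embedding.coe_subtype] at h2
    simp only [mem_filter, mem_neighborFinset]
    exact ⟨a.1.2, h2⟩
  · intro b; rfl
  · intro a; rfl

end Aux

lemma sum_curvature_eq {V : Type*} [Fintype V] (G : SimpleGraph V) :
    ∑ x : V, curvature G x = (eulerChar G : ℚ) := by
  classical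
  set C := Finset.univ.powerset.filter
      (fun s : Finset V => s.Nonempty ∧ G.IsClique (s : Set V)) with hC
  have key : ∀ x : V, (Finset.univ.powerset.filter
      (fun s : Finset V => x ∈ s ∧ G.IsClique (s : Set V))) = C.filter (fun s => x ∈ s) := by
    intro x; ext s
    simp only [hC, mem_filter, mem_powerset, Finset.subset_univ, true_and]
    constructor
    · rintro ⟨h2, h3⟩; exact ⟨⟨⟨x, h2⟩, h3⟩, h2⟩
    · rintro ⟨⟨h2, h3⟩, h4⟩; exact ⟨h4, h3⟩
  unfold curvature
  calc ∑ x : V, ∑ s ∈ (Finset.univ.powerset.filter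
        (fun s : Finset V => x ∈ s ∧ G.IsClique (s : Set V))),
        (-1 : ℚ) ^ (s.card + 1) / (s.card : ℚ)
      = ∑ x : V, ∑ s ∈ C, if x ∈ s then (-1 : ℚ) ^ (s.card + 1) / (s.card : ℚ) else 0 := by
        refine Finset.sum_congr rfl fun x _ => ?_
        rw [key x, Finset.sum_filter]
    _ = ∑ s ∈ C, ∑ x : V, if x ∈ s then (-1 : ℚ) ^ (s.card + 1) / (s.card : ℚ) else 0 :=
        Finset.sum_comm
    _ = ∑ s ∈ C, (-1 : ℚ) ^ (s.card + 1) := by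
        refine Finset.sum_congr rfl fun s hs => ?_
        rw [Finset.sum_ite_mem, Finset.univ_inter, Finset.sum_const, nsmul_eq_mul]
        have hne : (s.card : ℚ) ≠ 0 := by
          have := (Finset.mem_filter.mp hs).2.1
          simpa [Finset.card_eq_zero] using fun h => this.ne_empty h
        field_simp
    _ = (eulerChar G : ℚ) := by unfold eulerChar; push_cast; rfl

lemma curv_eq {V : Type*} [Fintype V] (G : SimpleGraph V) (x : V)
    (htri : ∀ y z w : V, G.Adj x y → G.Adj x z → G.Adj x w →
      G.Adj y z → G.Adj z w → G.Adj y w → False)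
    (hdeg : ∀ y : V, G.Adj x y →
      ((G.neighborFinset x).filter (fun z => G.Adj y z)).card = 2) :
    curvature G x = 1 - (G.degree x : ℚ) / 6 := by
  classical
  unfold curvature
  set N := G.neighborFinset x with hN
  set F := Finset.univ.powerset.filter
      (fun s : Finset V => x ∈ s ∧ G.IsClique (s : Set V)) with hF
  have hmemF : ∀ s : Finset V, s ∈ F ↔ x ∈ s ∧ G.IsClique (s : Set V) := by
    intro s; simp [hF]
  have hyAdj : ∀ y ∈ N, G.Adj x y := fun y hy => by rw [hN, SimpleGraph.mem_neighborFinset] at hy; exact hy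
  have hxN : x ∉ N := by simp [hN]
  have hnbr : ∀ s ∈ F, ∀ y ∈ s, y ≠ x → G.Adj x y := by
    intro s hs y hy hyx
    obtain ⟨hxs, hcl⟩ := (hmemF s).1 hs
    exact hcl (Finset.mem_coe.mpr hxs) (Finset.mem_coe.mpr hy) (Ne.symm hyx)
  have hclF : ∀ s ∈ F, ∀ y ∈ s, ∀ z ∈ s, y ≠ z → G.Adj y z := by
    intro s hs y hy z hz hyz
    exact ((hmemF s).1 hs).2 (Finset.mem_coe.mpr hy) (Finset.mem_coe.mpr hz) hyz
  -- cliques containing x have at most 3 vertices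
  have hcard3 : ∀ s ∈ F, s.card ≤ 3 := by
    intro s hs
    by_contra h
    push_neg at h
    have h3 : 3 ≤ (s.erase x).card := by
      rw [Finset.card_erase_of_mem ((hmemF s).1 hs).1]; omega
    obtain ⟨t, hts, ht3⟩ := Finset.exists_subset_card_eq h3
    obtain ⟨a, b, c, hab, hac, hbc, rfl⟩ := Finset.card_eq_three.mp ht3
    have ha := hts (by simp : a ∈ ({a,b,c} : Finset V))
    have hb := hts (by simp : b ∈ ({a,b,c} : Finset V))
    have hc := hts (by simp : c ∈ ({a,b,c} : Finset V))
    have hxa : G.Adj x a := hnbr s hs a (Finset.mem_of_mem_erase ha) (Finset.ne_of_mem_erase ha)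
    have hxb : G.Adj x b := hnbr s hs b (Finset.mem_of_mem_erase hb) (Finset.ne_of_mem_erase hb)
    have hxc : G.Adj x c := hnbr s hs c (Finset.mem_of_mem_erase hc) (Finset.ne_of_mem_erase hc)
    exact htri a b c hxa hxb hxc
      (hclF s hs a (Finset.mem_of_mem_erase ha) b (Finset.mem_of_mem_erase hb) hab)
      (hclF s hs b (Finset.mem_of_mem_erase hb) c (Finset.mem_of_mem_erase hc) hbc)
      (hclF s hs a (Finset.mem_of_mem_erase ha) c (Finset.mem_of_mem_erase hc) hac)
  -- cliques of size 1
  have hF1 : F.filter (fun s => s.card = 1) = {({x} : Finset V)} := by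
    ext s
    simp only [Finset.mem_filter, Finset.mem_singleton]
    constructor
    · rintro ⟨hs, hc1⟩
      obtain ⟨a, rfl⟩ := Finset.card_eq_one.mp hc1
      have := ((hmemF _).1 hs).1
      simp only [Finset.mem_singleton] at this
      subst this; rfl
    · rintro rfl
      refine ⟨(hmemF _).2 ⟨Finset.mem_singleton_self x, ?_⟩, Finset.card_singleton x⟩
      simp [SimpleGraph.isClique_singleton]
  -- cliques of size 2
  have hF2 : F.filter (fun s => s.card = 2) = N.image (fun y => ({x, y} : Finset V)) := by
    ext s
    simp only [Finset.mem_filter, Finset.mem_image]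
    constructor
    · rintro ⟨hs, hc2⟩
      obtain ⟨hxs, hcl⟩ := (hmemF s).1 hs
      obtain ⟨a, b, hab, rfl⟩ := Finset.card_eq_two.mp hc2
      rcases Finset.mem_insert.mp hxs with rfl | hxb
      · refine ⟨b, ?_, rfl⟩
        rw [hN, SimpleGraph.mem_neighborFinset]
        exact hnbr _ hs b (by simp) (Ne.symm hab)
      · simp only [Finset.mem_singleton] at hxb
        subst hxb
        refine ⟨a, ?_, ?_⟩
        · rw [hN, SimpleGraph.mem_neighborFinset]
          exact hnbr _ hs a (by simp) hab
        · rw [Finset.pair_comm]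
    · rintro ⟨y, hyN, rfl⟩
      have hxy : G.Adj x y := hyAdj y hyN
      refine ⟨(hmemF _).2 ⟨by simp, ?_⟩, Finset.card_pair hxy.ne⟩
      rw [Finset.coe_insert, Finset.coe_singleton]
      exact SimpleGraph.isClique_pair.mpr (fun _ => hxy)
  have hcF2 : (F.filter (fun s => s.card = 2)).card = N.card := by
    rw [hF2]
    apply Finset.card_image_of_injOn
    intro a ha b hb hab2
    have hab2' : ({x, a} : Finset V) = {x, b} := hab2
    have : a ∈ ({x, b} : Finset V) := by rw [← hab2']; simp
    rcases Finset.mem_insert.mp this with rfl | h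
    · exact absurd ha hxN
    · simpa using h
  -- cliques of size 3
  set P := (N ×ˢ N).filter (fun p : V × V => G.Adj p.1 p.2) with hP
  have hPmem : ∀ p : V × V, p ∈ P ↔ p.1 ∈ N ∧ p.2 ∈ N ∧ G.Adj p.1 p.2 := by
    intro p; simp [hP, Finset.mem_product, and_assoc]
  have hPcard : P.card = 2 * N.card := by
    have hfib : ∀ y ∈ N, (P.filter (fun p => p.1 = y)).card = 2 := by
      intro y hy
      have himg : P.filter (fun p => p.1 = y)
          = (N.filter (fun z => G.Adj y z)).image (fun z => (y, z)) := by
        ext ⟨a, b⟩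
        simp only [Finset.mem_filter, Finset.mem_image, hPmem]
        constructor
        · rintro ⟨⟨h1, h2, h3⟩, rfl⟩
          exact ⟨b, ⟨h2, h3⟩, rfl⟩
        · rintro ⟨z, ⟨hz1, hz2⟩, heq⟩
          have h1 : y = a := congrArg Prod.fst heq
          have h2 : z = b := congrArg Prod.snd heq
          subst h1; subst h2
          exact ⟨⟨hy, hz1, hz2⟩, rfl⟩
      rw [himg, Finset.card_image_of_injective _ (fun a b h => by
        simpa using congrArg Prod.snd h)]
      exact hdeg y (hyAdj y hy)
    rw [Finset.card_eq_sum_card_fiberwise (fun p hp => ((hPmem p).1 hp).1),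
      Finset.sum_congr rfl hfib, Finset.sum_const, smul_eq_mul, mul_comm]
  have hcF3 : (F.filter (fun s => s.card = 3)).card = N.card := by
    have key : P.card = 2 * (F.filter (fun s => s.card = 3)).card := by
      have hmaps : ∀ p ∈ P, insert x {p.1, p.2} ∈ F.filter (fun s => s.card = 3) := by
        rintro ⟨a, b⟩ hp
        obtain ⟨haN, hbN, hadj⟩ := (hPmem _).1 hp
        have hxa : G.Adj x a := hyAdj a haN
        have hxb : G.Adj x b := hyAdj b hbN
        have hxnotin : x ∉ ({a, b} : Finset V) := by
          simp only [Finset.mem_insert, Finset.mem_singleton]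
          push_neg
          exact ⟨hxa.ne, hxb.ne⟩
        refine Finset.mem_filter.mpr ⟨(hmemF _).2 ⟨by simp, ?_⟩, ?_⟩
        · rw [Finset.coe_insert, Finset.coe_insert, Finset.coe_singleton]
          refine (SimpleGraph.isClique_pair.mpr (fun _ => hadj)).insert ?_
          intro c hc _
          rcases hc with rfl | rfl
          · exact hxa
          · exact hxb
        · rw [Finset.card_insert_of_notMem hxnotin, Finset.card_pair hadj.ne]
      have hfib2 : ∀ s ∈ F.filter (fun s => s.card = 3),
          (P.filter (fun p => insert x {p.1, p.2} = s)).card = 2 := by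
        intro s hs
        obtain ⟨hsF, hc3⟩ := Finset.mem_filter.mp hs
        obtain ⟨hxs, hcl⟩ := (hmemF s).1 hsF
        have h2 : (s.erase x).card = 2 := by
          rw [Finset.card_erase_of_mem hxs, hc3]
        obtain ⟨a, b, hab, hep⟩ := Finset.card_eq_two.mp h2
        have ha : a ∈ s.erase x := by rw [hep]; simp
        have hb : b ∈ s.erase x := by rw [hep]; simp
        have hxa : G.Adj x a := hnbr s hsF a (Finset.mem_of_mem_erase ha) (Finset.ne_of_mem_erase ha)
        have hxb : G.Adj x b := hnbr s hsF b (Finset.mem_of_mem_erase hb) (Finset.ne_of_mem_erase hb)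
        have haN : a ∈ N := by rw [hN, SimpleGraph.mem_neighborFinset]; exact hxa
        have hbN : b ∈ N := by rw [hN, SimpleGraph.mem_neighborFinset]; exact hxb
        have hadj : G.Adj a b := hclF s hsF a (Finset.mem_of_mem_erase ha) b (Finset.mem_of_mem_erase hb) hab
        have hsval : insert x ({a, b} : Finset V) = s := by
          rw [← hep, Finset.insert_erase hxs]
        have hset : P.filter (fun p => insert x {p.1, p.2} = s)
            = {(a, b), (b, a)} := by
          ext ⟨u, v⟩
          simp only [Finset.mem_filter, Finset.mem_insert, Finset.mem_singleton, hPmem,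
            Prod.mk.injEq]
          constructor
          · rintro ⟨⟨huN, hvN, huv⟩, heq⟩
            have hu : u ∈ s.erase x := by
              rw [Finset.mem_erase]
              refine ⟨(hyAdj u huN).ne', ?_⟩
              rw [← heq]; simp
            have hv : v ∈ s.erase x := by
              rw [Finset.mem_erase]
              refine ⟨(hyAdj v hvN).ne', ?_⟩
              rw [← heq]; simp
            rw [hep] at hu hv
            simp only [Finset.mem_insert, Finset.mem_singleton] at hu hv
            rcases hu with rfl | rfl <;> rcases hv with rfl | rfl
            · exact absurd rfl huv.ne
            · exact Or.inl ⟨rfl, rfl⟩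
            · exact Or.inr ⟨rfl, rfl⟩
            · exact absurd rfl huv.ne
          · rintro (⟨rfl, rfl⟩ | ⟨rfl, rfl⟩)
            · exact ⟨⟨haN, hbN, hadj⟩, hsval⟩
            · exact ⟨⟨hbN, haN, hadj.symm⟩, by rw [Finset.pair_comm]; exact hsval⟩
        rw [hset, Finset.card_insert_of_notMem (by simp [Prod.ext_iff]; exact fun h _ => hab (h ▸ rfl)), Finset.card_singleton]
      rw [Finset.card_eq_sum_card_fiberwise hmaps, Finset.sum_congr rfl hfib2,
        Finset.sum_const, smul_eq_mul, mul_comm]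
    omega
  -- splitting the sum
  have hd1 : Disjoint (F.filter (fun s => s.card = 1)) (F.filter (fun s => s.card = 2)) := by
    rw [Finset.disjoint_left]
    intro s h1 h2
    have := (Finset.mem_filter.mp h1).2
    have := (Finset.mem_filter.mp h2).2
    omega
  have hd2 : Disjoint ((F.filter (fun s => s.card = 1)) ∪ (F.filter (fun s => s.card = 2)))
      (F.filter (fun s => s.card = 3)) := by
    rw [Finset.disjoint_left]
    intro s h1 h2
    have h3 := (Finset.mem_filter.mp h2).2
    rcases Finset.mem_union.mp h1 with h | h <;>
      · have := (Finset.mem_filter.mp h).2; omega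
  have hsplit : F = ((F.filter (fun s => s.card = 1)) ∪ (F.filter (fun s => s.card = 2)))
      ∪ (F.filter (fun s => s.card = 3)) := by
    ext s
    simp only [Finset.mem_union, Finset.mem_filter]
    constructor
    · intro hs
      have h1 : 1 ≤ s.card := Finset.card_pos.mpr ⟨x, ((hmemF s).1 hs).1⟩
      have h3 := hcard3 s hs
      have : s.card = 1 ∨ s.card = 2 ∨ s.card = 3 := by omega
      tauto
    · tauto
  rw [hsplit, Finset.sum_union hd2, Finset.sum_union hd1]
  have e1 : ∑ s ∈ F.filter (fun s => s.card = 1), ((-1:ℚ)^(s.card+1)/(s.card:ℚ)) = 1 := by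
    rw [hF1, Finset.sum_singleton]
    norm_num
  have e2 : ∑ s ∈ F.filter (fun s => s.card = 2), ((-1:ℚ)^(s.card+1)/(s.card:ℚ))
      = (N.card : ℚ) * (-1/2) := by
    calc ∑ s ∈ F.filter (fun s => s.card = 2), ((-1:ℚ)^(s.card+1)/(s.card:ℚ))
        = ∑ _s ∈ F.filter (fun s => s.card = 2), (-1/2 : ℚ) := by
          refine Finset.sum_congr rfl fun s hs => ?_
          rw [(Finset.mem_filter.mp hs).2]; norm_num
      _ = (N.card : ℚ) * (-1/2) := by
          rw [Finset.sum_const, hcF2, nsmul_eq_mul]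
  have e3 : ∑ s ∈ F.filter (fun s => s.card = 3), ((-1:ℚ)^(s.card+1)/(s.card:ℚ))
      = (N.card : ℚ) * (1/3) := by
    calc ∑ s ∈ F.filter (fun s => s.card = 3), ((-1:ℚ)^(s.card+1)/(s.card:ℚ))
        = ∑ _s ∈ F.filter (fun s => s.card = 3), (1/3 : ℚ) := by
          refine Finset.sum_congr rfl fun s hs => ?_
          rw [(Finset.mem_filter.mp hs).2]; norm_num
      _ = (N.card : ℚ) * (1/3) := by
          rw [Finset.sum_const, hcF3, nsmul_eq_mul]
  rw [e1, e2, e3]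
  have hdN : G.degree x = N.card := rfl
  rw [hdN]
  ring

/-- Gauss–Bonnet for two-dimensional geometric graphs: if every unit sphere `S(x)`
(the subgraph induced on the neighbors of `x`) is isomorphic to the cycle graph of
length `d(x) ≥ 4`, then the curvature at every vertex is `1 − d(x)/6` and these
curvatures sum to the Euler characteristic. -/
theorem gauss_bonnet_two_dimensional {V : Type*} [Fintype V] (G : SimpleGraph V)
    (hgeom : ∀ x : V, 4 ≤ G.degree x ∧
      Nonempty ((G.induce (G.neighborSet x)) ≃g SimpleGraph.cycleGraph (G.degree x))) :
    (∀ x : V, curvature G x = 1 - (G.degree x : ℚ) / 6) ∧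
    ∑ x : V, (1 - (G.degree x : ℚ) / 6) = (eulerChar G : ℚ) := by
  have hcurv : ∀ x : V, curvature G x = 1 - (G.degree x : ℚ) / 6 := by
    intro x
    obtain ⟨hd4, ⟨e⟩⟩ := hgeom x
    obtain ⟨m, hm⟩ : ∃ m, G.degree x = m + 4 := ⟨G.degree x - 4, by omega⟩
    rw [hm] at e
    exact curv_eq G x (fun y z w hy hz hw hyz hzw hyw => tri_near G x e hy hz hw hyz hzw hyw)
      (fun y hy => deg_two G x e hy)
  refine ⟨hcurv, ?_⟩
  rw [← sum_curvature_eq G]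
  exact Finset.sum_congr rfl fun x _ => (hcurv x).symm
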